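/- Let P be a μ-invariant Markov kernel with positive weak conductance profile Φ(v) := inf{(μ⊗P)(A×Aᶜ)/μ(A) : v ≤ μ(A) ≤ 1/2} for v ∈ (0,1/2]. Then for every measurable function f with values in [0,1], ess sup_μ f = 1 and μ({f = 0}) ≥ 1/2, and every r ∈ (0,1/2): μ(f) − r ≤ α₁(r)·𝓔₁(P,f), where α₁(r) := sup_{r ≤ s ≤ 1/2} (s − r)/(s·Φ(s)). -/

import Mathlib

open MeasureTheory ProbabilityTheory
open scoped ENNReal

/-- The weak conductance profile of a `μ`-invariant Markov kernel `P`: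
`Φ(v) = inf {(μ ⊗ P)(A × Aᶜ)/μ(A) : v ≤ μ(A) ≤ 1/2}`. -/
noncomputable def weakConductanceProfile {E : Type*} [MeasurableSpace E]
    (μ : Measure E) (P : Kernel E E) [IsMarkovKernel P] (v : ℝ) : ℝ :=
  sInf {y : ℝ | ∃ A : Set E, MeasurableSet A ∧
    v ≤ (μ A).toReal ∧ (μ A).toReal ≤ 1 / 2 ∧
    y = ((μ.compProd P) (A ×ˢ Aᶜ)).toReal / (μ A).toReal}

lemma nu_symm_aux {E : Type*} [MeasurableSpace E] (μ : Measure E) [IsProbabilityMeasure μ]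
    (P : Kernel E E) [IsMarkovKernel P]
    (hinv : ∀ B : Set E, MeasurableSet B → ∫⁻ x, P x B ∂μ = μ B)
    {A : Set E} (hA : MeasurableSet A) :
    (μ.compProd P) (Aᶜ ×ˢ A) = (μ.compProd P) (A ×ˢ Aᶜ) := by
  rw [Measure.compProd_apply_prod hA.compl hA, Measure.compProd_apply_prod hA hA.compl]
  have hmA : Measurable fun x => P x A := P.measurable_coe hA
  have h1 : ∫⁻ x in A, P x A ∂μ + ∫⁻ x in Aᶜ, P x A ∂μ = μ A := by
    rw [lintegral_add_compl _ hA]; exact hinv A hA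
  have h2 : ∫⁻ x in A, P x A ∂μ + ∫⁻ x in A, P x Aᶜ ∂μ = μ A := by
    rw [← lintegral_add_left hmA]
    calc ∫⁻ x in A, (P x A + P x Aᶜ) ∂μ = ∫⁻ _ in A, 1 ∂μ := by
          refine setLIntegral_congr_fun hA (fun x _ => ?_)
          rw [measure_add_measure_compl hA, measure_univ]
      _ = μ A := setLIntegral_one A
  have hfin : ∫⁻ x in A, P x A ∂μ ≠ ∞ := by
    have hle : ∫⁻ x in A, P x A ∂μ ≤ μ A := by
      calc ∫⁻ x in A, P x A ∂μ ≤ ∫⁻ _ in A, 1 ∂μ := lintegral_mono fun x => prob_le_one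
        _ = μ A := setLIntegral_one A
    exact ne_top_of_le_ne_top (measure_ne_top μ A) hle
  exact (ENNReal.add_right_inj hfin).mp (h1.trans h2.symm)


/-- if `P` has positive weak conductance profile `Φ`, then for every
measurable `f : E → [0,1]` with `ess sup_μ f = 1` and `μ({f = 0}) ≥ 1/2`, and every
`r ∈ (0, 1/2)`, `μ(f) - r ≤ α₁(r)·𝓔₁(P, f)` where
`α₁(r) = sup_{r ≤ s ≤ 1/2} (s - r)/(s·Φ(s))`. -/
theorem L1_WPI_from_weak_conductance
    {E : Type*} [MeasurableSpace E] (μ : Measure E) [IsProbabilityMeasure μ]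
    (P : Kernel E E) [IsMarkovKernel P]
    (hinv : ∀ B : Set E, MeasurableSet B → ∫⁻ x, P x B ∂μ = μ B)
    (hΦpos : ∀ v ∈ Set.Ioc (0 : ℝ) (1 / 2), 0 < weakConductanceProfile μ P v)
    (f : E → ℝ) (hf : Measurable f) (hf01 : ∀ x, f x ∈ Set.Icc (0 : ℝ) 1)
    (hsup : essSup f μ = 1)
    (hzero : (1 / 2 : ℝ≥0∞) ≤ μ {x | f x = 0}) :
    ∀ r ∈ Set.Ioo (0 : ℝ) (1 / 2),
      (∫ x, f x ∂μ) - r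
        ≤ sSup ((fun s => (s - r) / (s * weakConductanceProfile μ P s)) ''
              Set.Icc r (1 / 2))
          * ((1 / 2) * ∫ x, ∫ y, |f y - f x| ∂(P x) ∂μ) := by
  intro r hr
  obtain ⟨hr0, hr2⟩ := hr
  set ν : Measure (E × E) := μ.compProd P with hνdef
  set Φ : ℝ → ℝ := weakConductanceProfile μ P with hΦdef
  set α : ℝ := sSup ((fun s => (s - r) / (s * Φ s)) '' Set.Icc r (1 / 2)) with hαdef
  set Sset : ℝ → Set ℝ := fun v => {y : ℝ | ∃ A : Set E, MeasurableSet A ∧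
    v ≤ (μ A).toReal ∧ (μ A).toReal ≤ 1 / 2 ∧
    y = (ν (A ×ˢ Aᶜ)).toReal / (μ A).toReal} with hSdef
  have hΦeq : ∀ v, Φ v = sInf (Sset v) := fun v => rfl
  have hSbdd : ∀ v, BddBelow (Sset v) := by
    intro v
    refine ⟨0, ?_⟩
    rintro y ⟨A, hA, h1, h2, rfl⟩
    exact div_nonneg ENNReal.toReal_nonneg ENNReal.toReal_nonneg
  have hSne : ∀ v ∈ Set.Ioc (0 : ℝ) (1/2), (Sset v).Nonempty := by
    intro v hv
    by_contra hemp
    rw [Set.not_nonempty_iff_eq_empty] at hemp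
    have := hΦpos v hv
    rw [hΦdef] at this
    -- weakConductanceProfile μ P v = sInf (Sset v) = sInf ∅ = 0
    have h0 : weakConductanceProfile μ P v = 0 := by
      show sInf (Sset v) = 0
      rw [hemp, Real.sInf_empty]
    rw [h0] at this; exact lt_irrefl 0 this
  have hΦr : 0 < Φ r := hΦpos r ⟨hr0, le_of_lt hr2⟩
  have hbdd : BddAbove ((fun s => (s - r) / (s * Φ s)) '' Set.Icc r (1 / 2)) := by
    refine ⟨(1/2 - r) / (r * Φ r), ?_⟩
    rintro y ⟨s, hs, rfl⟩
    have hs0 : 0 < s := lt_of_lt_of_le hr0 hs.1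
    have hΦs : 0 < Φ s := hΦpos s ⟨hs0, hs.2⟩
    have hΦrs : Φ r ≤ Φ s := by
      rw [hΦeq r, hΦeq s]
      refine csInf_le_csInf (hSbdd r) (hSne s ⟨hs0, hs.2⟩) ?_
      rintro y ⟨A, hA, h1, h2, rfl⟩
      exact ⟨A, hA, le_trans hs.1 h1, h2, rfl⟩
    have hmul : r * Φ r ≤ s * Φ s :=
      mul_le_mul hs.1 hΦrs (le_of_lt hΦr) (le_of_lt hs0)
    exact div_le_div₀ (by linarith [hr2]) (by linarith [hs.2]) (by positivity) hmul
  have hα0 : 0 ≤ α := by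
    have hmem : (fun s => (s - r) / (s * Φ s)) r ∈
        (fun s => (s - r) / (s * Φ s)) '' Set.Icc r (1 / 2) :=
      ⟨r, ⟨le_rfl, le_of_lt hr2⟩, rfl⟩
    have hle := le_csSup hbdd hmem
    simp only [sub_self, zero_div] at hle
    rw [← hαdef] at hle
    exact hle
  -- superlevel sets
  set F : ℝ → Set E := fun t => {x | t < f x} with hFdef
  have hFm : ∀ t, MeasurableSet (F t) := fun t => measurableSet_lt measurable_const hf
  have hπ : MeasurableSet {x | f x = 0} := hf (measurableSet_singleton 0)
  have hFhalf : ∀ t : ℝ, 0 < t → μ (F t) ≤ 1/2 := by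
    intro t ht
    have hsub : F t ⊆ {x | f x = 0}ᶜ := by
      intro x hx
      simp only [Set.mem_compl_iff, Set.mem_setOf_eq]
      intro h
      rw [hFdef] at hx
      simp only [Set.mem_setOf_eq] at hx
      linarith
    calc μ (F t) ≤ μ ({x | f x = 0}ᶜ) := measure_mono hsub
      _ = 1 - μ {x | f x = 0} := by
          rw [measure_compl hπ (measure_ne_top μ _), measure_univ]
      _ ≤ 1 - 1/2 := tsub_le_tsub_left hzero 1
      _ = 1/2 := by
          rw [ENNReal.sub_half (by norm_num)]
  -- key per-level bound
  have hkey : ∀ t ∈ Set.Ioc (0:ℝ) 1,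
      μ (F t) ≤ ENNReal.ofReal r + ENNReal.ofReal α * ν (F t ×ˢ (F t)ᶜ) := by
    intro t ht
    have hAhalf : μ (F t) ≤ 1/2 := hFhalf t ht.1
    have hAne : μ (F t) ≠ ∞ := measure_ne_top μ _
    set s : ℝ := (μ (F t)).toReal with hsdef
    have hs_half : s ≤ 1/2 := by
      have h := ENNReal.toReal_mono (by norm_num : (1/2 : ℝ≥0∞) ≠ ∞) hAhalf
      simpa using h
    have hμA : μ (F t) = ENNReal.ofReal s := (ENNReal.ofReal_toReal hAne).symm
    by_cases hcase : s ≤ r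
    · calc μ (F t) = ENNReal.ofReal s := hμA
        _ ≤ ENNReal.ofReal r := ENNReal.ofReal_le_ofReal hcase
        _ ≤ _ := le_self_add
    · push_neg at hcase
      have hs0 : 0 < s := lt_trans hr0 hcase
      set X : ℝ := (ν (F t ×ˢ (F t)ᶜ)).toReal with hXdef
      have hX0 : 0 ≤ X := ENNReal.toReal_nonneg
      have hΦs : 0 < Φ s := hΦpos s ⟨hs0, hs_half⟩
      have hΦle : Φ s ≤ X / s := by
        rw [hΦeq s]
        exact csInf_le (hSbdd s) ⟨F t, hFm t, le_rfl, hs_half, rfl⟩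
      have h1 : s * Φ s ≤ X := by
        rw [le_div_iff₀ hs0] at hΦle
        nlinarith
      have hgα : (s - r) / (s * Φ s) ≤ α :=
        le_csSup hbdd ⟨s, ⟨le_of_lt hcase, hs_half⟩, rfl⟩
      have h2 : s - r ≤ α * X := by
        have hpos : 0 < s * Φ s := mul_pos hs0 hΦs
        have heq : s - r = ((s - r) / (s * Φ s)) * (s * Φ s) :=
          (div_mul_cancel₀ _ (ne_of_gt hpos)).symm
        calc s - r = ((s - r) / (s * Φ s)) * (s * Φ s) := heq
          _ ≤ α * (s * Φ s) := mul_le_mul_of_nonneg_right hgα (le_of_lt hpos)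
          _ ≤ α * X := mul_le_mul_of_nonneg_left h1 hα0
      calc μ (F t) = ENNReal.ofReal s := hμA
        _ ≤ ENNReal.ofReal (r + α * X) := ENNReal.ofReal_le_ofReal (by linarith)
        _ = ENNReal.ofReal r + ENNReal.ofReal (α * X) :=
            ENNReal.ofReal_add (le_of_lt hr0) (by positivity)
        _ = ENNReal.ofReal r + ENNReal.ofReal α * ENNReal.ofReal X := by
            rw [ENNReal.ofReal_mul hα0]
        _ = ENNReal.ofReal r + ENNReal.ofReal α * ν (F t ×ˢ (F t)ᶜ) := by
            rw [hXdef, ENNReal.ofReal_toReal (measure_ne_top ν _)]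
  -- layer cake for f
  have hf_nn : 0 ≤ᵐ[μ] f := Filter.Eventually.of_forall fun x => (hf01 x).1
  have hlayer : ∫⁻ x, ENNReal.ofReal (f x) ∂μ = ∫⁻ t in Set.Ioi (0:ℝ), μ (F t) :=
    lintegral_eq_lintegral_meas_lt μ hf_nn hf.aemeasurable
  have hsplit : ∫⁻ t in Set.Ioi (0:ℝ), μ (F t) = ∫⁻ t in Set.Ioc (0:ℝ) 1, μ (F t) := by
    rw [← Set.Ioc_union_Ioi_eq_Ioi (zero_le_one : (0:ℝ) ≤ 1),
      lintegral_union measurableSet_Ioi (Set.Ioc_disjoint_Ioi le_rfl)]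
    have hz : ∀ t ∈ Set.Ioi (1:ℝ), μ (F t) = (fun _ => (0:ℝ≥0∞)) t := by
      intro t ht
      have : F t = ∅ := by
        ext x
        simp only [hFdef, Set.mem_setOf_eq, Set.mem_empty_iff_false, iff_false, not_lt]
        have := (hf01 x).2
        have := Set.mem_Ioi.mp ht
        linarith
      simp [this]
    rw [setLIntegral_congr_fun measurableSet_Ioi hz]
    simp
  -- the total conductance integral
  set T : ℝ≥0∞ := ∫⁻ t in Set.Ioi (0:ℝ), ν (F t ×ˢ (F t)ᶜ) with hTdef
  have hbound : ∫⁻ x, ENNReal.ofReal (f x) ∂μ ≤ ENNReal.ofReal r + ENNReal.ofReal α * T := by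
    rw [hlayer, hsplit]
    have step1 : ∫⁻ t in Set.Ioc (0:ℝ) 1, μ (F t)
        ≤ ∫⁻ t in Set.Ioc (0:ℝ) 1,
            (ENNReal.ofReal r + ENNReal.ofReal α * ν (F t ×ˢ (F t)ᶜ)) :=
      lintegral_mono_ae (ae_restrict_of_forall_mem measurableSet_Ioc hkey)
    have step2 : ∫⁻ t in Set.Ioc (0:ℝ) 1,
          (ENNReal.ofReal r + ENNReal.ofReal α * ν (F t ×ˢ (F t)ᶜ))
        = ENNReal.ofReal r * volume (Set.Ioc (0:ℝ) 1)
          + ENNReal.ofReal α * ∫⁻ t in Set.Ioc (0:ℝ) 1, ν (F t ×ˢ (F t)ᶜ) := by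
      rw [lintegral_add_left measurable_const, setLIntegral_const,
        lintegral_const_mul' _ _ ENNReal.ofReal_ne_top]
    have step3 : ENNReal.ofReal r * volume (Set.Ioc (0:ℝ) 1)
          + ENNReal.ofReal α * ∫⁻ t in Set.Ioc (0:ℝ) 1, ν (F t ×ˢ (F t)ᶜ)
        ≤ ENNReal.ofReal r + ENNReal.ofReal α * T := by
      refine add_le_add ?_ (mul_le_mul_right (lintegral_mono_set Set.Ioc_subset_Ioi_self) _)
      rw [Real.volume_Ioc]
      simp
    exact le_trans step1 (le_of_eq step2 |>.trans step3)
  -- co-area for the Dirichlet-type form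
  set L : ℝ≥0∞ := ∫⁻ p : E × E, ENNReal.ofReal |f p.2 - f p.1| ∂ν with hLdef
  have hiff : ∀ (t : ℝ) (p : E × E),
      t ∈ Set.Ico (min (f p.1) (f p.2)) (max (f p.1) (f p.2)) ↔
        p ∈ (F t ×ˢ (F t)ᶜ) ∪ ((F t)ᶜ ×ˢ F t) := by
    intro t p
    simp only [Set.mem_Ico, min_le_iff, lt_max_iff, Set.mem_union, Set.mem_prod,
      Set.mem_compl_iff, hFdef, Set.mem_setOf_eq, not_lt]
    constructor
    · rintro ⟨h1 | h1, h2 | h2⟩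
      · linarith
      · exact Or.inr ⟨h1, h2⟩
      · exact Or.inl ⟨h2, h1⟩
      · linarith
    · rintro (⟨h1, h2⟩ | ⟨h1, h2⟩)
      · exact ⟨Or.inr h2, Or.inl h1⟩
      · exact ⟨Or.inl h1, Or.inr h2⟩
  have hUm : ∀ t : ℝ, MeasurableSet ((F t ×ˢ (F t)ᶜ) ∪ ((F t)ᶜ ×ˢ F t)) := fun t =>
    ((hFm t).prod (hFm t).compl).union ((hFm t).compl.prod (hFm t))
  have hLco : L = ∫⁻ t in Set.Ioi (0:ℝ), ν ((F t ×ˢ (F t)ᶜ) ∪ ((F t)ᶜ ×ˢ F t)) := by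
    have hpt : ∀ p : E × E, ENNReal.ofReal |f p.2 - f p.1|
        = ∫⁻ t in Set.Ioi (0:ℝ),
            (Set.Ico (min (f p.1) (f p.2)) (max (f p.1) (f p.2))).indicator
              (1 : ℝ → ℝ≥0∞) t := by
      intro p
      rw [lintegral_indicator_one measurableSet_Ico,
        Measure.restrict_apply measurableSet_Ico]
      have h1 : volume (Set.Ioo (min (f p.1) (f p.2)) (max (f p.1) (f p.2)))
          ≤ volume (Set.Ico (min (f p.1) (f p.2)) (max (f p.1) (f p.2)) ∩ Set.Ioi 0) := by
        refine measure_mono fun t ht => ?_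
        exact ⟨⟨le_of_lt ht.1, ht.2⟩,
          lt_of_le_of_lt (le_min (hf01 p.1).1 (hf01 p.2).1) ht.1⟩
      have h2 : volume (Set.Ico (min (f p.1) (f p.2)) (max (f p.1) (f p.2)) ∩ Set.Ioi 0)
          ≤ volume (Set.Ico (min (f p.1) (f p.2)) (max (f p.1) (f p.2))) :=
        measure_mono Set.inter_subset_left
      rw [Real.volume_Ioo] at h1
      rw [Real.volume_Ico] at h2
      have habs : max (f p.1) (f p.2) - min (f p.1) (f p.2) = |f p.2 - f p.1| := by
        rw [max_sub_min_eq_abs, abs_sub_comm]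
      rw [habs] at h1 h2
      exact le_antisymm h1 h2
    have hmeas : Measurable (Function.uncurry fun (p : E × E) (t : ℝ) =>
        (Set.Ico (min (f p.1) (f p.2)) (max (f p.1) (f p.2))).indicator
          (1 : ℝ → ℝ≥0∞) t) := by
      have heq : (Function.uncurry fun (p : E × E) (t : ℝ) =>
          (Set.Ico (min (f p.1) (f p.2)) (max (f p.1) (f p.2))).indicator
            (1 : ℝ → ℝ≥0∞) t)
          = Set.indicator ({q : (E × E) × ℝ | min (f q.1.1) (f q.1.2) ≤ q.2}
              ∩ {q : (E × E) × ℝ | q.2 < max (f q.1.1) (f q.1.2)}) 1 := by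
        ext ⟨p, t⟩
        simp only [Function.uncurry, Set.indicator_apply, Set.mem_Ico, Set.mem_inter_iff,
          Set.mem_setOf_eq, Pi.one_apply]
      rw [heq]
      have hmin : Measurable fun q : (E × E) × ℝ => min (f q.1.1) (f q.1.2) :=
        (hf.comp (measurable_fst.comp measurable_fst)).min
          (hf.comp (measurable_snd.comp measurable_fst))
      have hmax : Measurable fun q : (E × E) × ℝ => max (f q.1.1) (f q.1.2) :=
        (hf.comp (measurable_fst.comp measurable_fst)).max
          (hf.comp (measurable_snd.comp measurable_fst))
      exact measurable_const.indicator
        ((measurableSet_le hmin measurable_snd).inter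
          (measurableSet_lt measurable_snd hmax))
    calc L = ∫⁻ p, (∫⁻ t in Set.Ioi (0:ℝ),
          (Set.Ico (min (f p.1) (f p.2)) (max (f p.1) (f p.2))).indicator
            (1 : ℝ → ℝ≥0∞) t) ∂ν := lintegral_congr hpt
      _ = ∫⁻ t in Set.Ioi (0:ℝ), (∫⁻ p,
          (Set.Ico (min (f p.1) (f p.2)) (max (f p.1) (f p.2))).indicator
            (1 : ℝ → ℝ≥0∞) t ∂ν) := lintegral_lintegral_swap hmeas.aemeasurable
      _ = ∫⁻ t in Set.Ioi (0:ℝ), ν ((F t ×ˢ (F t)ᶜ) ∪ ((F t)ᶜ ×ˢ F t)) := by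
          refine lintegral_congr fun t => ?_
          have : ∀ p : E × E,
              (Set.Ico (min (f p.1) (f p.2)) (max (f p.1) (f p.2))).indicator
                (1 : ℝ → ℝ≥0∞) t
              = ((F t ×ˢ (F t)ᶜ) ∪ ((F t)ᶜ ×ˢ F t)).indicator
                (1 : E × E → ℝ≥0∞) p := by
            intro p
            simp only [Set.indicator_apply]
            by_cases h : t ∈ Set.Ico (min (f p.1) (f p.2)) (max (f p.1) (f p.2))
            · rw [if_pos h, if_pos ((hiff t p).mp h)]; rfl
            · rw [if_neg h, if_neg (fun hp => h ((hiff t p).mpr hp))]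
          rw [lintegral_congr this, lintegral_indicator_one (hUm t)]
  have hdisj : ∀ t : ℝ, Disjoint (F t ×ˢ (F t)ᶜ) ((F t)ᶜ ×ˢ F t) := fun t =>
    Set.disjoint_left.mpr fun p hp hq => hq.1 hp.1
  have hL2T : L = 2 * T := by
    rw [hLco, hTdef, ← lintegral_const_mul' 2 _ (by norm_num : (2:ℝ≥0∞) ≠ ∞)]
    refine lintegral_congr fun t => ?_
    rw [measure_union (hdisj t) ((hFm t).compl.prod (hFm t)),
      nu_symm_aux μ P hinv (hFm t), two_mul]
  -- finiteness
  have hLle : L ≤ 1 := by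
    rw [hLdef]
    calc ∫⁻ p : E × E, ENNReal.ofReal |f p.2 - f p.1| ∂ν ≤ ∫⁻ _ : E × E, 1 ∂ν := by
          refine lintegral_mono fun p => ?_
          refine ENNReal.ofReal_le_one.mpr (abs_le.mpr ⟨?_, ?_⟩)
          · have := (hf01 p.2).1; have := (hf01 p.1).2; linarith
          · have := (hf01 p.2).2; have := (hf01 p.1).1; linarith
      _ = 1 := by simp
  have hLfin : L ≠ ∞ := ne_top_of_le_ne_top (by norm_num) hLle
  have hTfin : T ≠ ∞ := by
    refine ne_top_of_le_ne_top hLfin ?_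
    rw [hL2T, two_mul]
    exact le_self_add
  -- identify the iterated integral with L.toReal
  have hgm : Measurable fun p : E × E => |f p.2 - f p.1| :=
    ((hf.comp measurable_snd).sub (hf.comp measurable_fst)).abs
  have hint : Integrable (fun p : E × E => |f p.2 - f p.1|) ν := by
    refine (integrable_const (1:ℝ)).mono' hgm.aestronglyMeasurable (ae_of_all _ fun p => ?_)
    rw [Real.norm_eq_abs, abs_abs]
    refine abs_le.mpr ⟨?_, ?_⟩
    · have := (hf01 p.2).1; have := (hf01 p.1).2; linarith
    · have := (hf01 p.2).2; have := (hf01 p.1).1; linarith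
  have hI : ∫ x, ∫ y, |f y - f x| ∂(P x) ∂μ = L.toReal := by
    rw [← Measure.integral_compProd hint]
    rw [integral_eq_lintegral_of_nonneg_ae (ae_of_all _ fun p => abs_nonneg _)
      hgm.aestronglyMeasurable]
  have hIf : ∫ x, f x ∂μ = (∫⁻ x, ENNReal.ofReal (f x) ∂μ).toReal := by
    rw [integral_eq_lintegral_of_nonneg_ae hf_nn hf.aestronglyMeasurable]
  have hRfin : ENNReal.ofReal r + ENNReal.ofReal α * T ≠ ∞ :=
    ENNReal.add_ne_top.mpr ⟨ENNReal.ofReal_ne_top,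
      ENNReal.mul_ne_top ENNReal.ofReal_ne_top hTfin⟩
  have hfinal : ∫ x, f x ∂μ ≤ r + α * T.toReal := by
    rw [hIf]
    have h := ENNReal.toReal_mono hRfin hbound
    rwa [ENNReal.toReal_add ENNReal.ofReal_ne_top
        (ENNReal.mul_ne_top ENNReal.ofReal_ne_top hTfin),
      ENNReal.toReal_mul, ENNReal.toReal_ofReal (le_of_lt hr0),
      ENNReal.toReal_ofReal hα0] at h
  have hTtoReal : T.toReal = (1/2) * L.toReal := by
    have h : L.toReal = 2 * T.toReal := by
      rw [hL2T, ENNReal.toReal_mul]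
      norm_num
    linarith
  rw [hI]
  rw [hTtoReal] at hfinal
  linarith
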